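/- For every symmetrizable hyperbolic generalized Cartan matrix A of rank n ≥ 3, the real roots of the corresponding root system fall into at most 4 disjoint Weyl group orbits; that is, the set of orbits {W·e_1, …, W·e_n} has at most 4 distinct elements (equivalently, the simply laced skeleton of A has at most 4 connected components). -/

import Mathlib

/-- An integer matrix is a generalized Cartan matrix (GCM). -/
def IsGCM {ι : Type} (A : Matrix ι ι ℤ) : Prop :=
  (∀ i, A i i = 2) ∧ (∀ i j, i ≠ j → A i j ≤ 0) ∧ (∀ i j, A i j = 0 → A j i = 0)

/-- A GCM is symmetrizable if there are nonzero rationals `d i` with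
`d i * A i j = d j * A j i` for all `i, j`. -/
def IsSymmetrizable {ι : Type} (A : Matrix ι ι ℤ) : Prop :=
  ∃ d : ι → ℚ, (∀ i, d i ≠ 0) ∧ ∀ i j, d i * (A i j : ℚ) = d j * (A j i : ℚ)

/-- The Dynkin diagram graph of a GCM: `i` adjacent to `j` iff `i ≠ j` and `A i j ≠ 0`.
(For a GCM, `A i j ≠ 0 ↔ A j i ≠ 0`, so adjacency is stated symmetrically.) -/
def dynkinGraph {ι : Type} (A : Matrix ι ι ℤ) : SimpleGraph ι where
  Adj i j := i ≠ j ∧ A i j ≠ 0 ∧ A j i ≠ 0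
  symm := ⟨fun i j h => ⟨h.1.symm, h.2.2, h.2.1⟩⟩
  loopless := ⟨fun i h => h.1 rfl⟩

/-- The principal submatrix of `A` with rows and columns in `S`. -/
def matSub {ι : Type} (A : Matrix ι ι ℤ) (S : Finset ι) : Matrix S S ℤ :=
  fun i j => A i.1 j.1

/-- A GCM is of finite type if all of its principal minors are positive. -/
def IsFiniteType {ι : Type} [Fintype ι] [DecidableEq ι] (A : Matrix ι ι ℤ) : Prop :=
  ∀ S : Finset ι, 0 < (matSub A S).det

/-- An indecomposable GCM is of affine type if its determinant is `0` and all proper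
principal minors are positive (i.e. every proper principal submatrix is of finite type). -/
def IsAffineType {ι : Type} [Fintype ι] [DecidableEq ι] (A : Matrix ι ι ℤ) : Prop :=
  (dynkinGraph A).Connected ∧ A.det = 0 ∧
    ∀ S : Finset ι, S ≠ Finset.univ → 0 < (matSub A S).det

/-- An indecomposable GCM of rank at least 3 is hyperbolic if it is of neither finite nor
affine type, but every proper connected principal submatrix is of finite or affine type. -/
def IsHyperbolic {ι : Type} [Fintype ι] [DecidableEq ι] (A : Matrix ι ι ℤ) : Prop :=
  3 ≤ Fintype.card ι ∧ (dynkinGraph A).Connected ∧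
  ¬ IsFiniteType A ∧ ¬ IsAffineType A ∧
  ∀ S : Finset ι, S ≠ Finset.univ →
    ((dynkinGraph A).induce (S : Set ι)).Connected →
    (IsFiniteType (matSub A S) ∨ IsAffineType (matSub A S))

/-- A hyperbolic GCM is of compact hyperbolic type if every proper connected principal
submatrix is of finite type. -/
def IsCompactHyperbolic {ι : Type} [Fintype ι] [DecidableEq ι] (A : Matrix ι ι ℤ) : Prop :=
  IsHyperbolic A ∧ ∀ S : Finset ι, S ≠ Finset.univ →
    ((dynkinGraph A).induce (S : Set ι)).Connected → IsFiniteType (matSub A S)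

/-- The Weyl group of an `n × n` GCM `A`: the subgroup of linear automorphisms of `ℚ^n`
generated by the simple reflections `s i`, where `s i (e j) = e j - A i j • e i`. -/
def weylGroup {n : ℕ} (A : Matrix (Fin n) (Fin n) ℤ) :
    Subgroup ((Fin n → ℚ) ≃ₗ[ℚ] (Fin n → ℚ)) :=
  Subgroup.closure {w | ∃ i, ∀ j, w (Pi.single j 1) =
    (Pi.single j 1 : Fin n → ℚ) - (A i j : ℚ) • (Pi.single i 1 : Fin n → ℚ)}

/-- The orbit of the simple root `e i` under the Weyl group of `A`. -/
def weylOrbit {n : ℕ} (A : Matrix (Fin n) (Fin n) ℤ) (i : Fin n) : Set (Fin n → ℚ) :=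
  {v | ∃ w ∈ weylGroup A, w (Pi.single i 1) = v}

/-- The simply laced skeleton of `A`: the simple graph with `i` adjacent to `j` iff
`i ≠ j` and `A i j = -1 = A j i`. -/
def skeleton {n : ℕ} (A : Matrix (Fin n) (Fin n) ℤ) : SimpleGraph (Fin n) where
  Adj i j := i ≠ j ∧ A i j = -1 ∧ A j i = -1
  symm := ⟨fun i j h => ⟨h.1.symm, h.2.2, h.2.1⟩⟩
  loopless := ⟨fun i h => h.1 rfl⟩


section Aux

open SimpleGraph Finset

namespace GCMaux

variable {n : ℕ} (A : Matrix (Fin n) (Fin n) ℤ)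

/-- the linear functional `v ↦ ∑ k, A i k * v k`. -/
def cfun (i : Fin n) : (Fin n → ℚ) →ₗ[ℚ] ℚ :=
  ∑ k, (A i k : ℚ) • (LinearMap.proj k : (Fin n → ℚ) →ₗ[ℚ] ℚ)

lemma cfun_apply (i : Fin n) (v : Fin n → ℚ) : cfun A i v = ∑ k, (A i k : ℚ) * v k := by
  simp [cfun]

lemma cfun_single (i j : Fin n) : cfun A i (Pi.single j 1) = (A i j : ℚ) := by
  rw [cfun_apply, Finset.sum_eq_single j]
  · simp
  · intro b _ hb; simp [Pi.single_apply, hb]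
  · simp

/-- underlying linear map of the simple reflection. -/
def rmap (i : Fin n) : (Fin n → ℚ) →ₗ[ℚ] (Fin n → ℚ) :=
  LinearMap.id - (cfun A i).smulRight ((Pi.single i 1 : Fin n → ℚ))

lemma rmap_apply (i : Fin n) (v : Fin n → ℚ) :
    rmap A i v = v - (cfun A i v) • (Pi.single i 1 : Fin n → ℚ) := by
  simp [rmap]

/-- the simple reflection as a linear equivalence. -/
def sRefl (i : Fin n) (h2 : A i i = 2) : (Fin n → ℚ) ≃ₗ[ℚ] (Fin n → ℚ) :=
  LinearEquiv.ofInvolutive (rmap A i)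
    (by
      intro v
      rw [rmap_apply, rmap_apply]
      have h3 : cfun A i (Pi.single i 1) = 2 := by rw [cfun_single, h2]; norm_num
      rw [map_sub, map_smul, h3]
      have : (cfun A i v - cfun A i v • (2:ℚ)) = - cfun A i v := by
        simp [smul_eq_mul]; ring
      rw [this, neg_smul]
      abel)

lemma sRefl_apply (i : Fin n) (h2 : A i i = 2) (v : Fin n → ℚ) :
    sRefl A i h2 v = v - (cfun A i v) • (Pi.single i 1 : Fin n → ℚ) := by
  have : sRefl A i h2 v = rmap A i v := rfl
  rw [this, rmap_apply]

lemma sRefl_single (i j : Fin n) (h2 : A i i = 2) :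
    sRefl A i h2 (Pi.single j 1)
      = (Pi.single j 1 : Fin n → ℚ) - (A i j : ℚ) • (Pi.single i 1 : Fin n → ℚ) := by
  rw [sRefl_apply, cfun_single]

lemma sRefl_mem (i : Fin n) (h2 : A i i = 2) : sRefl A i h2 ∈ weylGroup A :=
  Subgroup.subset_closure ⟨i, fun j => sRefl_single A i j h2⟩

lemma orbit_eq_of_witness {i j : Fin n} (u : (Fin n → ℚ) ≃ₗ[ℚ] (Fin n → ℚ))
    (hu : u ∈ weylGroup A) (huij : u (Pi.single i 1) = Pi.single j 1) :
    weylOrbit A i = weylOrbit A j := by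
  ext v
  constructor
  · rintro ⟨w, hw, rfl⟩
    refine ⟨w * u⁻¹, mul_mem hw (inv_mem hu), ?_⟩
    have h1 : (w * u⁻¹) (Pi.single j 1) = w (u.symm (Pi.single j 1)) := rfl
    rw [h1, ← huij, u.symm_apply_apply]
  · rintro ⟨w, hw, rfl⟩
    refine ⟨w * u, mul_mem hw hu, ?_⟩
    have h1 : (w * u) (Pi.single i 1) = w (u (Pi.single i 1)) := rfl
    rw [h1, huij]

lemma orbit_eq_of_skelAdj (hA : IsGCM A) {i j : Fin n} (h : (skeleton A).Adj i j) :
    weylOrbit A i = weylOrbit A j := by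
  obtain ⟨hne, hij, hji⟩ := h
  refine orbit_eq_of_witness A (sRefl A i (hA.1 i) * sRefl A j (hA.1 j))
    (mul_mem (sRefl_mem A i (hA.1 i)) (sRefl_mem A j (hA.1 j))) ?_
  have h1 : (sRefl A i (hA.1 i) * sRefl A j (hA.1 j)) (Pi.single i 1)
      = sRefl A i (hA.1 i) (sRefl A j (hA.1 j) (Pi.single i 1)) := rfl
  rw [h1, sRefl_apply A j, cfun_single, hji, sRefl_apply A i]
  have h2 : cfun A i ((Pi.single i 1 : Fin n → ℚ) - ((-1 : ℤ) : ℚ) • (Pi.single j 1 : Fin n → ℚ))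
      = (1 : ℚ) := by
    rw [map_sub, map_smul, cfun_single, cfun_single, hA.1 i, hij]
    norm_num
  rw [h2]
  push_cast
  ext k
  by_cases hk : k = i <;> by_cases hk' : k = j <;>
    simp [Pi.single_apply, hk, hk', hne, Ne.symm hne] <;> ring_nf <;>
    simp_all [Pi.single_apply]

end GCMaux


open GCMaux

lemma exists_removable {V : Type} [Fintype V] [DecidableEq V] (G : SimpleGraph V)
    (S : Finset V) (hconn : (G.induce (S : Set V)).Connected) (h2 : 2 ≤ S.card) :
    ∃ v ∈ S, (G.induce ((S.erase v : Finset V) : Set V)).Connected := by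
  classical
  set H := G.induce (S : Set V) with hH
  obtain ⟨x⟩ := hconn.nonempty
  obtain ⟨v, -, hmax⟩ := Finset.exists_max_image Finset.univ (H.dist x)
    ⟨x, Finset.mem_univ x⟩
  have hvx : v ≠ x := by
    intro heq
    obtain ⟨y, hyS, hyx⟩ : ∃ y ∈ S, y ≠ (x : V) := by
      by_contra hcon
      push_neg at hcon
      have hsub : S ⊆ {(x : V)} := fun z hz => Finset.mem_singleton.2 (hcon z hz)
      have := Finset.card_le_card hsub
      simp at this
      omega
    have hpos : 0 < H.dist x ⟨y, by simpa using hyS⟩ :=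
      hconn.pos_dist_of_ne (by simp [Subtype.ext_iff, Ne.symm hyx])
    have hle := hmax ⟨y, by simpa using hyS⟩ (Finset.mem_univ _)
    have h0 : H.dist x v = 0 := by rw [heq]; simp
    omega
  refine ⟨v.1, by simpa using v.2, ?_⟩
  apply SimpleGraph.induce_connected_of_patches (u := x.1)
  · simp only [Finset.coe_erase, Set.mem_diff, Set.mem_singleton_iff]
    exact ⟨by simpa using x.2, fun h => hvx (Subtype.ext h.symm)⟩
  · intro z hz
    simp only [Finset.coe_erase, Set.mem_diff, Set.mem_singleton_iff] at hz
    obtain ⟨hzS, hzv⟩ := hz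
    set zS : ↥(S : Set V) := ⟨z, by simpa using hzS⟩ with hzS'
    have hr : H.Reachable x zS := hconn.preconnected x zS
    obtain ⟨p, hp⟩ := hr.exists_walk_length_eq_dist
    have hv : v ∉ p.support := by
      intro hvs
      have h1 := SimpleGraph.dist_le (p.takeUntil v hvs)
      have h2' := SimpleGraph.dist_le (p.dropUntil v hvs)
      have h3 : (p.takeUntil v hvs).length + (p.dropUntil v hvs).length = p.length := by
        rw [← SimpleGraph.Walk.length_append, SimpleGraph.Walk.take_spec]
      have h4 : 0 < H.dist v zS :=
        hconn.pos_dist_of_ne (fun h => hzv (congrArg Subtype.val h).symm)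
      have h5 : H.dist x zS ≤ H.dist x v := hmax _ (Finset.mem_univ _)
      omega
    refine ⟨Subtype.val '' {u : ↥(S : Set V) | u ∈ p.support}, ?_, ⟨x, p.start_mem_support, rfl⟩,
      ⟨zS, p.end_mem_support, rfl⟩, ?_⟩
    · rintro _ ⟨u, hu, rfl⟩
      simp only [Finset.coe_erase, Set.mem_diff, Set.mem_singleton_iff]
      refine ⟨by simpa using u.2, fun huv => hv ?_⟩
      have : u = v := Subtype.ext huv
      rwa [← this]
    · have hcsup := p.connected_induce_support
      have reach : (H.induce {u | u ∈ p.support}).Reachable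
          ⟨x, p.start_mem_support⟩ ⟨zS, p.end_mem_support⟩ :=
        hcsup.preconnected _ _
      let φ : (H.induce {u | u ∈ p.support}) →g
          (G.induce (Subtype.val '' {u : ↥(S : Set V) | u ∈ p.support})) :=
        ⟨fun u => ⟨u.1.1, ⟨u.1, u.2, rfl⟩⟩, fun {a b} h => h⟩
      exact reach.map φ


lemma master {V : Type} [Fintype V] [DecidableEq V] {β : Type} [DecidableEq β]
    (G : SimpleGraph V) [DecidableRel G.Adj] (f : V → β) (w : V → V → ℝ)
    (hsym : ∀ i j, w i j = w j i)
    (h1 : ∀ i j, G.Adj i j → 1 ≤ w i j)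
    (h2 : ∀ i j, G.Adj i j → f i ≠ f j → Real.sqrt 2 ≤ w i j) :
    ∀ (k : ℕ) (S : Finset V), S.card ≤ k → (G.induce (S : Set V)).Connected →
      2 * ((S.card : ℝ) - 1) + (((S.image f).card : ℝ) - 1) * (2 * Real.sqrt 2 - 2)
        ≤ ∑ i ∈ S, ∑ j ∈ S, (if G.Adj i j then w i j else 0) := by
  have hs2 : (1:ℝ) ≤ Real.sqrt 2 := by
    rw [show (1:ℝ) = Real.sqrt 1 from (Real.sqrt_one).symm]
    exact Real.sqrt_le_sqrt (by norm_num)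
  have hFnonneg : ∀ i j, 0 ≤ (if G.Adj i j then w i j else 0) := by
    intro i j
    by_cases h : G.Adj i j
    · simpa [h] using le_trans (by norm_num) (h1 i j h)
    · simp [h]
  intro k
  induction k with
  | zero =>
    intro S hcard hconn
    obtain ⟨⟨a, ha⟩⟩ := hconn.nonempty
    have : a ∈ S := by simpa using ha
    have := Finset.card_pos.2 ⟨a, this⟩
    omega
  | succ k ih =>
    intro S hcard hconn
    rcases le_or_gt S.card k with hle | hlt
    · exact ih S hle hconn
    by_cases hone : S.card ≤ 1
    · -- singleton case
      have h1' : S.card = 1 := by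
        obtain ⟨⟨a, ha⟩⟩ := hconn.nonempty
        have : a ∈ S := by simpa using ha
        have := Finset.card_pos.2 ⟨a, this⟩
        omega
      obtain ⟨a, rfl⟩ := Finset.card_eq_one.1 h1'
      simp [SimpleGraph.irrefl]
    push_neg at hone
    obtain ⟨v, hvS, hconn'⟩ := exists_removable G S hconn hone
    set S' := S.erase v with hS'
    have hcard' : S'.card = S.card - 1 := Finset.card_erase_of_mem hvS
    have hcardR : (S'.card : ℝ) = (S.card : ℝ) - 1 := by
      rw [hcard']; push_cast [Nat.cast_sub (by omega : 1 ≤ S.card)]; ring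
    have IH := ih S' (by omega) hconn'
    -- a neighbor of v inside S'
    obtain ⟨u, huS', hadj⟩ : ∃ u ∈ S', G.Adj v u := by
      obtain ⟨y, hyS, hyv⟩ : ∃ y ∈ S, y ≠ v := by
        obtain ⟨a, ha, b, hb, hab⟩ := Finset.one_lt_card.1 hone
        rcases eq_or_ne a v with rfl | h
        · exact ⟨b, hb, fun hbv => hab hbv.symm⟩
        · exact ⟨a, ha, h⟩
      have hr : (G.induce (S : Set V)).Reachable ⟨v, by simpa using hvS⟩
          ⟨y, by simpa using hyS⟩ := hconn.preconnected _ _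
      obtain ⟨p⟩ := hr
      cases p with
      | nil => exact absurd rfl hyv
      | @cons _ b _ h q =>
        exact ⟨b.1, Finset.mem_erase.2 ⟨(G.ne_of_adj h).symm, by simpa using b.2⟩, h⟩
    -- split the sum
    set F : V → V → ℝ := fun i j => if G.Adj i j then w i j else 0 with hF
    have hFsym : ∀ i j, F i j = F j i := by
      intro i j
      by_cases h : G.Adj i j
      · simp [hF, h, h.symm, hsym i j]
      · have h' : ¬ G.Adj j i := fun h' => h h'.symm
        simp [hF, h, h']
    have hsplit : ∑ i ∈ S, ∑ j ∈ S, F i j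
        = 2 * (∑ j ∈ S', F v j) + ∑ i ∈ S', ∑ j ∈ S', F i j := by
      have hinner : ∀ i, ∑ j ∈ S, F i j = F i v + ∑ j ∈ S', F i j := by
        intro i
        exact (Finset.add_sum_erase S (F i) hvS).symm
      calc ∑ i ∈ S, ∑ j ∈ S, F i j = ∑ i ∈ S, (F i v + ∑ j ∈ S', F i j) := by
            exact Finset.sum_congr rfl fun i _ => hinner i
        _ = (∑ i ∈ S, F i v) + ∑ i ∈ S, ∑ j ∈ S', F i j := Finset.sum_add_distrib
        _ = (F v v + ∑ i ∈ S', F i v)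
            + ((∑ j ∈ S', F v j) + ∑ i ∈ S', ∑ j ∈ S', F i j) := by
            rw [← Finset.add_sum_erase S (fun i => F i v) hvS,
               ← Finset.add_sum_erase S (fun i => ∑ j ∈ S', F i j) hvS]
        _ = 2 * (∑ j ∈ S', F v j) + ∑ i ∈ S', ∑ j ∈ S', F i j := by
            have hvv : F v v = 0 := by simp [hF, SimpleGraph.irrefl]
            have : ∑ i ∈ S', F i v = ∑ j ∈ S', F v j :=
              Finset.sum_congr rfl fun i _ => hFsym i v
            rw [hvv, this]; ring
    have hrow : F v u ≤ ∑ j ∈ S', F v j :=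
      Finset.single_le_sum (fun j _ => hFnonneg v j) huS'
    by_cases hc : ∃ y ∈ S', f y = f v
    · -- color of v survives
      have himg : S.image f ⊆ S'.image f := by
        intro b hb
        obtain ⟨x, hxS, rfl⟩ := Finset.mem_image.1 hb
        rcases eq_or_ne x v with rfl | hxv
        · obtain ⟨y, hyS', hy⟩ := hc
          exact Finset.mem_image.2 ⟨y, hyS', hy⟩
        · exact Finset.mem_image.2 ⟨x, Finset.mem_erase.2 ⟨hxv, hxS⟩, rfl⟩
      have hcle : ((S.image f).card : ℝ) ≤ ((S'.image f).card : ℝ) := by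
        exact_mod_cast Finset.card_le_card himg
      have hFvu : 1 ≤ F v u := by simpa [hF, hadj] using h1 v u hadj
      rw [hsplit]
      have hmul : (((S.image f).card : ℝ) - 1) * (2 * Real.sqrt 2 - 2)
          ≤ (((S'.image f).card : ℝ) - 1) * (2 * Real.sqrt 2 - 2) := by
        apply mul_le_mul_of_nonneg_right (by linarith) (by linarith)
      nlinarith [IH, hrow]
    · push_neg at hc
      have hFvu : Real.sqrt 2 ≤ F v u := by
        have := h2 v u hadj (fun h => (hc u huS') h.symm)
        simpa [hF, hadj] using this
      have himg : S.image f ⊆ insert (f v) (S'.image f) := by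
        intro b hb
        obtain ⟨x, hxS, rfl⟩ := Finset.mem_image.1 hb
        rcases eq_or_ne x v with rfl | hxv
        · exact Finset.mem_insert_self _ _
        · exact Finset.mem_insert_of_mem
            (Finset.mem_image.2 ⟨x, Finset.mem_erase.2 ⟨hxv, hxS⟩, rfl⟩)
      have hcle : ((S.image f).card : ℝ) ≤ ((S'.image f).card : ℝ) + 1 := by
        have := Finset.card_le_card himg
        have h2' := Finset.card_insert_le (f v) (S'.image f)
        exact_mod_cast le_trans (Nat.cast_le.2 this) (by exact_mod_cast h2')
      rw [hsplit]
      have hmul : (((S.image f).card : ℝ) - 1) * (2 * Real.sqrt 2 - 2)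
          ≤ (((S'.image f).card : ℝ) - 1) * (2 * Real.sqrt 2 - 2)
            + (2 * Real.sqrt 2 - 2) := by
        nlinarith [hcle]
      nlinarith [IH, hrow]


variable {N : ℕ}

/-- real principal submatrix -/
def rsub (B : Matrix (Fin N) (Fin N) ℝ) (T : Finset (Fin N)) : Matrix T T ℝ :=
  fun i j => B i.1 j.1

lemma det_rsub_singleton (B : Matrix (Fin N) (Fin N) ℝ) (a : Fin N) :
    (rsub B {a}).det = B a a := by
  haveI : Unique (({a} : Finset (Fin N)) : Type) :=
    ⟨⟨⟨a, Finset.mem_singleton_self a⟩⟩, by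
      rintro ⟨x, hx⟩
      simp only [Finset.mem_singleton] at hx
      exact Subtype.ext hx⟩
  rw [Matrix.det_unique]
  have hdef : ((default : (({a} : Finset (Fin N)) : Type)) : Fin N) = a := by
    have h := (default : (({a} : Finset (Fin N)) : Type)).2
    exact Finset.mem_singleton.1 h
  simp only [rsub]
  rw [hdef]

/-- equivalence between `T ⊕ Unit` and `insert a T` when `a ∉ T`. -/
def insertEquiv (a : Fin N) (T : Finset (Fin N)) (ha : a ∉ T) :
    (T : Type) ⊕ Unit ≃ ((insert a T : Finset (Fin N)) : Type) where
  toFun x := x.elim (fun t => ⟨t.1, Finset.mem_insert_of_mem t.2⟩)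
    (fun _ => ⟨a, Finset.mem_insert_self a T⟩)
  invFun x := if h : x.1 ∈ T then Sum.inl ⟨x.1, h⟩ else Sum.inr ()
  left_inv x := by
    rcases x with t | u
    · simp [t.2]
    · simp [ha]
  right_inv x := by
    by_cases h : x.1 ∈ T
    · simp [h]
    · have : x.1 = a := by
        rcases Finset.mem_insert.1 x.2 with h' | h'
        · exact h'
        · exact absurd h' h
      simp only [h, dif_neg, not_false_iff]
      exact Subtype.ext this.symm

lemma schur_det (B : Matrix (Fin N) (Fin N) ℝ) (a : Fin N) (haa : B a a ≠ 0)
    (T : Finset (Fin N)) (ha : a ∉ T) :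
    (rsub B (insert a T)).det
      = B a a * (rsub (fun i j => B i j - B i a * B a j / B a a) T).det := by
  classical
  set e := insertEquiv a T ha
  have h1 : ((rsub B (insert a T)).submatrix e e).det = (rsub B (insert a T)).det :=
    Matrix.det_submatrix_equiv_self e _
  set d : Matrix Unit Unit ℝ := fun _ _ => B a a with hd
  set col : Matrix (T : Type) Unit ℝ := fun i _ => B i.1 a with hcol
  set row : Matrix Unit (T : Type) ℝ := fun _ j => B a j.1 with hrow
  have hblock : (rsub B (insert a T)).submatrix e e
      = Matrix.fromBlocks (rsub B T) col row d := by
    ext i j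
    rcases i with i | i <;> rcases j with j | j <;> rfl
  set dinv : Matrix Unit Unit ℝ := fun _ _ => (B a a)⁻¹ with hdinv
  have hleft : dinv * d = 1 := by
    ext i j
    rw [Matrix.mul_apply]
    simp [hd, hdinv, Matrix.mul_apply, Matrix.one_apply, inv_mul_cancel₀ haa]
  have hright : d * dinv = 1 := by
    ext i j
    rw [Matrix.mul_apply]
    simp [hd, hdinv, Matrix.mul_apply, Matrix.one_apply, mul_inv_cancel₀ haa]
  haveI : Invertible d := ⟨dinv, hleft, hright⟩
  have h2 := Matrix.det_fromBlocks₂₂ (rsub B T) col row d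
  have hdet_d : d.det = B a a := by
    rw [Matrix.det_unique]
  have hinv : (⅟d : Matrix Unit Unit ℝ) = dinv := invOf_eq_right_inv hright
  have hschur : rsub B T - col * ⅟d * row
      = rsub (fun i j => B i j - B i a * B a j / B a a) T := by
    ext i j
    simp only [Matrix.sub_apply, Matrix.mul_apply, hinv, Fintype.sum_unique]
    simp only [hcol, hrow, hdinv, rsub]
    ring
  rw [← h1, hblock, h2, hdet_d, hschur]


lemma qsplit (B : Matrix (Fin N) (Fin N) ℝ) (hB : ∀ i j, B i j = B j i)
    (a : Fin N) (haa : B a a ≠ 0) (x : Fin N → ℝ) :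
    ∑ i, ∑ j, x i * x j * B i j
      = B a a * (x a + (∑ j, Function.update x a 0 j * B a j) / B a a)^2
        + ∑ i, ∑ j, Function.update x a 0 i * Function.update x a 0 j
            * (B i j - B i a * B a j / B a a) := by
  classical
  set y : Fin N → ℝ := Function.update x a 0 with hy
  set σ : Fin N → ℝ := Pi.single a (x a) with hσ
  have hhelp : ∀ g : Fin N → ℝ, ∑ j, σ j * g j = x a * g a := by
    intro g
    rw [Finset.sum_eq_single a]
    · simp [hσ]
    · intro b _ hb
      simp [hσ, Pi.single_eq_of_ne hb]
    · simp
  have hx : ∀ i, x i = y i + σ i := by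
    intro i
    by_cases h : i = a
    · subst h; simp [hy, hσ]
    · simp [hy, hσ, Function.update_of_ne h, Pi.single_eq_of_ne h]
  set s : ℝ := ∑ j, y j * B a j with hs
  have hs' : ∑ i, y i * B i a = s := by
    rw [hs]
    exact Finset.sum_congr rfl fun i _ => by rw [hB i a]
  set P : ℝ := ∑ i, ∑ j, y i * y j * B i j with hP
  -- expand LHS
  have hL : ∑ i, ∑ j, x i * x j * B i j
      = P + x a * s + x a * s + x a * (x a * B a a) := by
    have expand : ∀ i j, x i * x j * B i j
        = y i * y j * B i j + (y i * σ j * B i j + (σ i * y j * B i j + σ i * σ j * B i j)) := by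
      intro i j; rw [hx i, hx j]; ring
    have h0 : ∑ i, ∑ j, x i * x j * B i j
        = (∑ i, ∑ j, y i * y j * B i j) + ((∑ i, ∑ j, y i * σ j * B i j)
          + ((∑ i, ∑ j, σ i * y j * B i j) + (∑ i, ∑ j, σ i * σ j * B i j))) := by
      have e1 : ∑ i, ∑ j, x i * x j * B i j
          = ∑ i, ∑ j, (y i * y j * B i j
            + (y i * σ j * B i j + (σ i * y j * B i j + σ i * σ j * B i j))) :=
        Finset.sum_congr rfl fun i _ => Finset.sum_congr rfl fun j _ => expand i j
      rw [e1]
      simp only [Finset.sum_add_distrib]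
    have hT2 : ∑ i, ∑ j, y i * σ j * B i j = x a * s := by
      have : ∀ i, ∑ j, y i * σ j * B i j = x a * (y i * B i a) := by
        intro i
        rw [show ∑ j, y i * σ j * B i j = ∑ j, σ j * (y i * B i j) from
          Finset.sum_congr rfl fun j _ => by ring]
        exact hhelp _
      rw [Finset.sum_congr rfl fun i _ => this i, ← Finset.mul_sum, hs']
    have hT3 : ∑ i, ∑ j, σ i * y j * B i j = x a * s := by
      have h1 : ∀ i, ∑ j, σ i * y j * B i j = σ i * ∑ j, y j * B i j := by
        intro i
        rw [Finset.mul_sum]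
        exact Finset.sum_congr rfl fun j _ => by ring
      rw [Finset.sum_congr rfl fun i _ => h1 i, hhelp (fun i => ∑ j, y j * B i j)]
    have hT4 : ∑ i, ∑ j, σ i * σ j * B i j = x a * (x a * B a a) := by
      have h1 : ∀ i, ∑ j, σ i * σ j * B i j = σ i * (x a * B i a) := by
        intro i
        rw [show ∑ j, σ i * σ j * B i j = ∑ j, σ j * (σ i * B i j) from
          Finset.sum_congr rfl fun j _ => by ring]
        rw [hhelp (fun j => σ i * B i j)]
        ring
      rw [Finset.sum_congr rfl fun i _ => h1 i, hhelp (fun i => x a * B i a)]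
    rw [h0, hT2, hT3, hT4, ← hP]
    ring
  -- expand RHS second piece
  have hR2 : ∑ i, ∑ j, y i * y j * (B i j - B i a * B a j / B a a)
      = P - s * s / B a a := by
    have h1 : ∀ i, ∑ j, y i * y j * (B i j - B i a * B a j / B a a)
        = (∑ j, y i * y j * B i j) - (y i * B i a) * s / B a a := by
      intro i
      rw [show ∑ j, y i * y j * (B i j - B i a * B a j / B a a)
          = ∑ j, (y i * y j * B i j - (y i * B i a) * (y j * B a j) / B a a) from
        Finset.sum_congr rfl fun j _ => by ring]
      rw [Finset.sum_sub_distrib]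
      congr 1
      rw [← Finset.sum_div, ← Finset.mul_sum, hs]
    rw [Finset.sum_congr rfl fun i _ => h1 i, Finset.sum_sub_distrib, ← hP]
    congr 1
    rw [← Finset.sum_div, ← Finset.sum_mul, hs']
  rw [hL, hR2]
  field_simp
  ring


/-- Schur complement matrix -/
noncomputable def schurC (B : Matrix (Fin N) (Fin N) ℝ) (a : Fin N) : Matrix (Fin N) (Fin N) ℝ :=
  fun i j => B i j - B i a * B a j / B a a

lemma schur_det' (B : Matrix (Fin N) (Fin N) ℝ) (a : Fin N) (haa : B a a ≠ 0)
    (T : Finset (Fin N)) (ha : a ∉ T) :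
    (rsub B (insert a T)).det = B a a * (rsub (schurC B a) T).det :=
  schur_det B a haa T ha

lemma qsplit' (B : Matrix (Fin N) (Fin N) ℝ) (hB : ∀ i j, B i j = B j i)
    (a : Fin N) (haa : B a a ≠ 0) (x : Fin N → ℝ) :
    ∑ i, ∑ j, x i * x j * B i j
      = B a a * (x a + (∑ j, Function.update x a 0 j * B a j) / B a a)^2
        + ∑ i, ∑ j, Function.update x a 0 i * Function.update x a 0 j * schurC B a i j :=
  qsplit B hB a haa x

theorem qform_nonneg : ∀ (k : ℕ) (B : Matrix (Fin N) (Fin N) ℝ),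
    (∀ i j, B i j = B j i) → ∀ S : Finset (Fin N), S.card ≤ k →
    (∀ T ⊆ S, T ≠ S → 0 < (rsub B T).det) → 0 ≤ (rsub B S).det →
    ∀ x : Fin N → ℝ, (∀ i, i ∉ S → x i = 0) → 0 ≤ ∑ i, ∑ j, x i * x j * B i j := by
  intro k
  induction k with
  | zero =>
    intro B hB S hcard hmin hS x hx
    have hS0 : S = ∅ := Finset.card_eq_zero.1 (by omega)
    have hx0 : ∀ i, x i = 0 := fun i => hx i (by simp [hS0])
    simp [hx0]
  | succ k ih =>
    intro B hB S hcard hmin hS x hx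
    rcases S.eq_empty_or_nonempty with rfl | ⟨a, ha⟩
    · have hx0 : ∀ i, x i = 0 := fun i => hx i (by simp)
      simp [hx0]
    by_cases hsingle : S = {a}
    · -- singleton case
      have hxi : ∀ i, i ≠ a → x i = 0 := by
        intro i hi
        exact hx i (by simp [hsingle, hi])
      have h1 : ∀ i, ∑ j, x i * x j * B i j = x i * x a * B i a := by
        intro i
        rw [Finset.sum_eq_single a]
        · intro b _ hb; rw [hxi b hb]; ring
        · intro h; exact absurd (Finset.mem_univ a) h
      have h2 : ∑ i, ∑ j, x i * x j * B i j = x a * x a * B a a := by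
        rw [Finset.sum_congr rfl fun i _ => h1 i, Finset.sum_eq_single a]
        · intro b _ hb; rw [hxi b hb]; ring
        · intro h; exact absurd (Finset.mem_univ a) h
      have hBaa : 0 ≤ B a a := by
        rw [hsingle] at hS
        rwa [det_rsub_singleton] at hS
      rw [h2]
      exact mul_nonneg (mul_self_nonneg (x a)) hBaa
    · -- main case: Schur complement induction
      have hproper : ({a} : Finset (Fin N)) ≠ S := fun h => hsingle h.symm
      have hBaa : 0 < B a a := by
        have := hmin {a} (Finset.singleton_subset_iff.2 ha) hproper
        rwa [det_rsub_singleton] at this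
      have haa : B a a ≠ 0 := ne_of_gt hBaa
      set C := schurC B a with hCdef
      have hC : ∀ i j, C i j = C j i := by
        intro i j
        simp only [hCdef, schurC]
        rw [hB i j, hB i a, hB a j]
        ring
      set S' := S.erase a with hS'def
      have hmin' : ∀ T ⊆ S', T ≠ S' → 0 < (rsub C T).det := by
        intro T hT hTne
        have haT : a ∉ T := fun h => (Finset.mem_erase.1 (hT h)).1 rfl
        have h1 : insert a T ⊆ S := by
          intro z hz
          rcases Finset.mem_insert.1 hz with rfl | hz'
          · exact ha
          · exact (Finset.mem_erase.1 (hT hz')).2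
        have h2 : insert a T ≠ S := by
          obtain ⟨b, hbS', hbT⟩ := Finset.exists_of_ssubset (lt_of_le_of_ne hT hTne)
          intro heq
          apply hbT
          have hbS : b ∈ S := (Finset.mem_erase.1 hbS').2
          have hba : b ≠ a := (Finset.mem_erase.1 hbS').1
          rw [← heq] at hbS
          rcases Finset.mem_insert.1 hbS with h | h
          · exact absurd h hba
          · exact h
        have hpos := hmin _ h1 h2
        rw [schur_det' B a haa T haT] at hpos
        nlinarith [hpos, hBaa]
      have hS'det : 0 ≤ (rsub C S').det := by
        have haS' : a ∉ S' := Finset.notMem_erase a S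
        have h1 : insert a S' = S := Finset.insert_erase ha
        have h2 := hS
        rw [← h1, schur_det' B a haa S' haS'] at h2
        nlinarith [h2, hBaa]
      set x' := Function.update x a 0 with hx'def
      have hx' : ∀ i, i ∉ S' → x' i = 0 := by
        intro i hi
        by_cases h : i = a
        · subst h; simp [hx'def]
        · rw [hx'def, Function.update_of_ne h]
          apply hx
          intro hiS
          exact hi (Finset.mem_erase.2 ⟨h, hiS⟩)
      have hcard' : S'.card ≤ k := by
        rw [hS'def, Finset.card_erase_of_mem ha]
        have := Finset.card_pos.2 ⟨a, ha⟩
        omega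
      have IH := ih C hC S' hcard' hmin' hS'det x' hx'
      rw [qsplit' B hB a haa x]
      have hsq : 0 ≤ B a a * (x a + (∑ j, Function.update x a 0 j * B a j) / B a a)^2 :=
        mul_nonneg hBaa.le (sq_nonneg _)
      rw [hx'def] at IH
      linarith [IH, hsq]


lemma subsub_det {n : ℕ} (A : Matrix (Fin n) (Fin n) ℤ) {U T : Finset (Fin n)} (hUT : U ⊆ T) :
    ∃ V : Finset { x // x ∈ T }, ((V = Finset.univ) ↔ (U = T)) ∧
      (matSub (matSub A T) V).det = (matSub A U).det := by
  classical
  refine ⟨Finset.univ.filter (fun x : { x // x ∈ T } => x.1 ∈ U), ⟨?_, ?_⟩, ?_⟩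
  · intro hV
    apply Finset.Subset.antisymm hUT
    intro t ht
    have h1 : (⟨t, ht⟩ : { x // x ∈ T })
        ∈ Finset.univ.filter (fun x : { x // x ∈ T } => x.1 ∈ U) := by
      rw [hV]; exact Finset.mem_univ _
    exact (Finset.mem_filter.1 h1).2
  · rintro rfl
    ext x
    simp [x.2]
  · set e : { x // x ∈ Finset.univ.filter (fun x : { x // x ∈ T } => x.1 ∈ U) }
        ≃ { x // x ∈ U } :=
      { toFun := fun x => ⟨x.1.1, (Finset.mem_filter.1 x.2).2⟩
        invFun := fun u => ⟨⟨u.1, hUT u.2⟩, Finset.mem_filter.2 ⟨Finset.mem_univ _, u.2⟩⟩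
        left_inv := fun x => Subtype.ext (Subtype.ext rfl)
        right_inv := fun u => rfl } with he
    have hmat : matSub (matSub A T) (Finset.univ.filter (fun x : { x // x ∈ T } => x.1 ∈ U))
        = (matSub A U).submatrix e e := rfl
    rw [hmat, Matrix.det_submatrix_equiv_self]

lemma hyp_minors {n : ℕ} (A : Matrix (Fin n) (Fin n) ℤ) (hhyp : IsHyperbolic A)
    {T : Finset (Fin n)} (hT : T ≠ Finset.univ)
    (hc : ((dynkinGraph A).induce (T : Set (Fin n))).Connected) :
    (∀ U ⊆ T, 0 ≤ (matSub A U).det) ∧ (∀ U ⊆ T, U ≠ T → 0 < (matSub A U).det) := by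
  rcases hhyp.2.2.2.2 T hT hc with hfin | haff
  · constructor
    · intro U hU
      obtain ⟨V, -, hdet⟩ := subsub_det A hU
      rw [← hdet]; exact (hfin V).le
    · intro U hU _
      obtain ⟨V, -, hdet⟩ := subsub_det A hU
      rw [← hdet]; exact hfin V
  · constructor
    · intro U hU
      rcases eq_or_ne U T with rfl | hne
      · exact le_of_eq haff.2.1.symm
      · obtain ⟨V, hViff, hdet⟩ := subsub_det A hU
        have hVne : V ≠ Finset.univ := fun h => hne (hViff.1 h)
        rw [← hdet]; exact (haff.2.2 V hVne).le
    · intro U hU hne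
      obtain ⟨V, hViff, hdet⟩ := subsub_det A hU
      have hVne : V ≠ Finset.univ := fun h => hne (hViff.1 h)
      rw [← hdet]; exact haff.2.2 V hVne

lemma d_pos {n : ℕ} (A : Matrix (Fin n) (Fin n) ℤ) (hA : IsGCM A)
    (hsym : IsSymmetrizable A) (hconn : (dynkinGraph A).Connected) :
    ∃ D : Fin n → ℚ, (∀ i, 0 < D i) ∧ ∀ i j, D i * (A i j : ℚ) = D j * (A j i : ℚ) := by
  obtain ⟨d, hd0, hds⟩ := hsym
  obtain ⟨i0⟩ := hconn.nonempty
  have key : ∀ (u v : Fin n) (p : (dynkinGraph A).Walk u v), 0 < d u * d v := by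
    intro u v p
    induction p with
    | nil => exact mul_self_pos.2 (hd0 _)
    | @cons a b c h q ih =>
      obtain ⟨hne, hab, hba⟩ := h
      have hAub : (A a b : ℚ) < 0 := by
        exact_mod_cast lt_of_le_of_ne (hA.2.1 a b hne) hab
      have hAba : (A b a : ℚ) < 0 := by
        exact_mod_cast lt_of_le_of_ne (hA.2.1 b a hne.symm) hba
      have hrel := hds a b
      have h2 : d a * d b * (A b a : ℚ) = (d a * d a) * (A a b : ℚ) := by
        linear_combination (-(d a)) * hrel
      have h3 : 0 < d a * d b := by
        have hq : (d a * d a) * (A a b : ℚ) < 0 :=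
          mul_neg_of_pos_of_neg (mul_self_pos.2 (hd0 a)) hAub
        rw [← h2] at hq
        nlinarith [hq, hAba]
      nlinarith [h3, ih, mul_self_pos.2 (hd0 b)]
  refine ⟨fun i => d i * d i0, fun i => ?_, fun i j => ?_⟩
  · obtain ⟨p⟩ := hconn.preconnected i i0
    exact key i i0 p
  · calc (d i * d i0) * (A i j : ℚ) = (d i * (A i j : ℚ)) * d i0 := by ring
      _ = (d j * (A j i : ℚ)) * d i0 := by rw [hds i j]
      _ = (d j * d i0) * (A j i : ℚ) := by ring

lemma sqrt_entry {di dj u v : ℝ} (hdi : 0 < di) (hdj : 0 < dj) (hu : 0 < u) (hv : 0 < v)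
    (hrel : di * u = dj * v) :
    (Real.sqrt di)⁻¹ * (Real.sqrt dj)⁻¹ * (di * (-u)) = - Real.sqrt (u * v) := by
  have hsdi := Real.sqrt_pos.2 hdi
  have hsdj := Real.sqrt_pos.2 hdj
  have hmdi : Real.sqrt di * Real.sqrt di = di := Real.mul_self_sqrt hdi.le
  have hmdj : Real.sqrt dj * Real.sqrt dj = dj := Real.mul_self_sqrt hdj.le
  have hpos : 0 ≤ (Real.sqrt di)⁻¹ * (Real.sqrt dj)⁻¹ * (di * u) := by positivity
  have hkey : Real.sqrt (u * v) = (Real.sqrt di)⁻¹ * (Real.sqrt dj)⁻¹ * (di * u) := by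
    have e1 : ((Real.sqrt di)⁻¹ * (Real.sqrt dj)⁻¹ * (di * u))^2
        = (di*u)*(di*u) * ((Real.sqrt di*Real.sqrt di)⁻¹ * (Real.sqrt dj*Real.sqrt dj)⁻¹) := by
      ring
    have e2 : ((Real.sqrt di)⁻¹ * (Real.sqrt dj)⁻¹ * (di * u))^2 = u * v := by
      rw [e1, hmdi, hmdj]
      field_simp
      linear_combination hrel
    rw [← e2, Real.sqrt_sq hpos]
  calc (Real.sqrt di)⁻¹ * (Real.sqrt dj)⁻¹ * (di * (-u))
      = -((Real.sqrt di)⁻¹ * (Real.sqrt dj)⁻¹ * (di * u)) := by ring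
    _ = - Real.sqrt (u * v) := by rw [hkey]

end Aux

/-- For a symmetrizable hyperbolic GCM, the real roots fall into at most 4 disjoint Weyl
group orbits: the set `{W·e 1, …, W·e n}` has at most 4 distinct elements. -/
theorem hyperbolic_at_most_four_weyl_orbits {n : ℕ} (A : Matrix (Fin n) (Fin n) ℤ)
    (hA : IsGCM A) (hsym : IsSymmetrizable A) (hhyp : IsHyperbolic A) :
    (Set.range fun i => weylOrbit A i).ncard ≤ 4 := by
  classical
  by_contra hcon
  push_neg at hcon
  set f : Fin n → Set (Fin n → ℚ) := fun i => weylOrbit A i with hfdef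
  have hrange : (Set.range fun i => weylOrbit A i) = ↑(Finset.univ.image f) := by
    rw [Finset.coe_image, Finset.coe_univ, Set.image_univ]
  have himg5 : 5 ≤ (Finset.univ.image f).card := by
    have h := hcon
    rw [hrange, Set.ncard_coe_finset] at h
    omega
  have hn5 : 5 ≤ n := by
    have h1 := Finset.card_image_le (s := (Finset.univ : Finset (Fin n))) (f := f)
    simp only [Finset.card_univ, Fintype.card_fin] at h1
    omega
  have hGconn : (dynkinGraph A).Connected := hhyp.2.1
  haveI hdec : DecidableRel (dynkinGraph A).Adj := fun a b => Classical.dec _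
  have hconnuniv :
      ((dynkinGraph A).induce ((Finset.univ : Finset (Fin n)) : Set (Fin n))).Connected := by
    rw [Finset.coe_univ]
    exact hGconn.map (SimpleGraph.induceUnivIso (dynkinGraph A)).symm.toHom
      (SimpleGraph.induceUnivIso (dynkinGraph A)).symm.toEquiv.surjective
  have hcard2 : 2 ≤ (Finset.univ : Finset (Fin n)).card := by
    simp only [Finset.card_univ, Fintype.card_fin]; omega
  obtain ⟨v, -, hconnT⟩ := exists_removable (dynkinGraph A) Finset.univ hconnuniv hcard2
  set T : Finset (Fin n) := Finset.univ.erase v with hTdef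
  have hTne : T ≠ Finset.univ := by
    intro h
    have hvT : v ∈ T := by rw [h]; exact Finset.mem_univ v
    rw [hTdef] at hvT
    exact Finset.notMem_erase v _ hvT
  have himgT : 4 ≤ (T.image f).card := by
    have hsub : Finset.univ.image f ⊆ insert (f v) (T.image f) := by
      intro b hb
      obtain ⟨y, hy, rfl⟩ := Finset.mem_image.1 hb
      rcases eq_or_ne y v with rfl | hyv
      · exact Finset.mem_insert_self _ _
      · exact Finset.mem_insert_of_mem (Finset.mem_image.2
          ⟨y, by rw [hTdef]; exact Finset.mem_erase.2 ⟨hyv, Finset.mem_univ y⟩, rfl⟩)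
    have h1 := Finset.card_le_card hsub
    have h2 := Finset.card_insert_le (f v) (T.image f)
    omega
  -- positive symmetrizer
  obtain ⟨D, hDpos, hDsym⟩ := d_pos A hA hsym hGconn
  set dR : Fin n → ℝ := fun i => ((D i : ℚ) : ℝ) with hdRdef
  have hdRpos : ∀ i, 0 < dR i := fun i => by
    simp only [hdRdef]; exact_mod_cast hDpos i
  have hdRsym : ∀ i j, dR i * ((A i j : ℤ) : ℝ) = dR j * ((A j i : ℤ) : ℝ) := by
    intro i j
    simp only [hdRdef]
    exact_mod_cast congrArg (fun q : ℚ => (q : ℝ)) (hDsym i j)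
  set BR : Matrix (Fin n) (Fin n) ℝ := fun i j => dR i * ((A i j : ℤ) : ℝ) with hBRdef
  have hBR : ∀ i j, BR i j = dR i * ((A i j : ℤ) : ℝ) := fun i j => by rw [hBRdef]
  have hBsym : ∀ i j, BR i j = BR j i := fun i j => by
    rw [hBR i j, hBR j i]; exact hdRsym i j
  -- minors of the symmetrized matrix
  obtain ⟨hmnn, hmpos⟩ := hyp_minors A hhyp hTne hconnT
  have hdet_cast : ∀ U : Finset (Fin n), (rsub (fun i j => ((A i j : ℤ) : ℝ)) U).det
      = (((matSub A U).det : ℤ) : ℝ) := by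
    intro U
    exact (RingHom.map_det (Int.castRingHom ℝ) (matSub A U)).symm
  have hdet_BR : ∀ U : Finset (Fin n), (rsub BR U).det
      = (∏ i : { y // y ∈ U }, dR i.1) * (rsub (fun i j => ((A i j : ℤ) : ℝ)) U).det := by
    intro U
    have h1 : rsub BR U = Matrix.diagonal (fun i : { y // y ∈ U } => dR i.1)
        * rsub (fun i j => ((A i j : ℤ) : ℝ)) U := by
      ext i j
      rw [Matrix.diagonal_mul]
      exact hBR i.1 j.1
    rw [h1, Matrix.det_mul, Matrix.det_diagonal]
  have hprodpos : ∀ U : Finset (Fin n), 0 < ∏ i : { y // y ∈ U }, dR i.1 :=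
    fun U => Finset.prod_pos fun i _ => hdRpos i.1
  have hBmin : ∀ U ⊆ T, U ≠ T → 0 < (rsub BR U).det := by
    intro U hU hne
    rw [hdet_BR U, hdet_cast U]
    have h2 : (0 : ℝ) < (((matSub A U).det : ℤ) : ℝ) := by exact_mod_cast hmpos U hU hne
    exact mul_pos (hprodpos U) h2
  have hBS : 0 ≤ (rsub BR T).det := by
    rw [hdet_BR T, hdet_cast T]
    have h2 : (0 : ℝ) ≤ (((matSub A T).det : ℤ) : ℝ) := by
      exact_mod_cast hmnn T (le_refl T)
    exact mul_nonneg (hprodpos T).le h2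
  -- the test vector
  set x : Fin n → ℝ := fun i => if i ∈ T then (Real.sqrt (dR i))⁻¹ else 0 with hxdef
  have hxval : ∀ i ∈ T, x i = (Real.sqrt (dR i))⁻¹ := by
    intro i hi; rw [hxdef]; simp [hi]
  have hxsupp : ∀ i, i ∉ T → x i = 0 := by
    intro i hi; rw [hxdef]; simp [hi]
  have hTcardn : T.card ≤ n := le_trans (Finset.card_le_univ T)
    (by simp only [Finset.card_univ, Fintype.card_fin]; omega)
  have hq := qform_nonneg n BR hBsym T hTcardn hBmin hBS x hxsupp
  -- the edge weight
  set wt : Fin n → Fin n → ℝ := fun i j => Real.sqrt (((A i j * A j i : ℤ) : ℝ)) with hwdef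
  have hwt : ∀ i j, wt i j = Real.sqrt (((A i j * A j i : ℤ) : ℝ)) := fun i j => by rw [hwdef]
  -- pointwise evaluation of the quadratic form on T
  have hterm : ∀ i ∈ T, ∀ j ∈ T, x i * x j * BR i j
      = (if i = j then (2:ℝ) else 0) - (if (dynkinGraph A).Adj i j then wt i j else 0) := by
    intro i hi j hj
    by_cases hij : i = j
    · subst hij
      rw [if_pos rfl, if_neg (SimpleGraph.irrefl _), hxval i hi, hBR i i]
      have hAii : ((A i i : ℤ) : ℝ) = 2 := by rw [hA.1 i]; norm_num
      have hs : Real.sqrt (dR i) * Real.sqrt (dR i) = dR i := Real.mul_self_sqrt (hdRpos i).le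
      have hsne : Real.sqrt (dR i) ≠ 0 := ne_of_gt (Real.sqrt_pos.2 (hdRpos i))
      rw [hAii, ← hs]
      field_simp
      rw [Real.sq_sqrt (sq_nonneg (Real.sqrt (dR i)))]
      ring
    · rw [if_neg hij]
      by_cases hadj : (dynkinGraph A).Adj i j
      · rw [if_pos hadj, hxval i hi, hxval j hj, hBR i j, hwt i j]
        obtain ⟨-, hij0, hji0⟩ := hadj
        have h1 : ((A i j : ℤ) : ℝ) < 0 := by
          exact_mod_cast lt_of_le_of_ne (hA.2.1 i j hij) hij0
        have h2 : ((A j i : ℤ) : ℝ) < 0 := by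
          exact_mod_cast lt_of_le_of_ne (hA.2.1 j i (Ne.symm hij)) hji0
        have hrel : dR i * (-((A i j : ℤ) : ℝ)) = dR j * (-((A j i : ℤ) : ℝ)) := by
          have h3 := hdRsym i j; linarith
        have hse := sqrt_entry (hdRpos i) (hdRpos j) (by linarith) (by linarith) hrel
        have h4 : (Real.sqrt (dR i))⁻¹ * (Real.sqrt (dR j))⁻¹ * (dR i * ((A i j : ℤ):ℝ))
            = - Real.sqrt ((-((A i j : ℤ):ℝ)) * (-((A j i : ℤ):ℝ))) := by
          rw [← hse]; ring
        rw [h4]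
        have h5 : ((-((A i j : ℤ):ℝ)) * (-((A j i : ℤ):ℝ))) = ((A i j * A j i : ℤ) : ℝ) := by
          push_cast; ring
        rw [h5]; ring
      · rw [if_neg hadj]
        have hz : A i j = 0 := by
          by_contra h0
          have hji0 : A j i ≠ 0 := fun h => h0 (hA.2.2 j i h)
          exact hadj ⟨hij, h0, hji0⟩
        rw [hBR i j, hz]
        norm_num
  -- rewrite the quadratic form as 2|T| - weighted edge sum
  have hrestrict : ∑ i, ∑ j, x i * x j * BR i j = ∑ i ∈ T, ∑ j ∈ T, x i * x j * BR i j := by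
    have step1 : ∀ i : Fin n, ∑ j, x i * x j * BR i j = ∑ j ∈ T, x i * x j * BR i j := by
      intro i
      refine (Finset.sum_subset (Finset.subset_univ T) ?_).symm
      intro j _ hj
      rw [hxsupp j hj]; ring
    rw [Finset.sum_congr rfl fun i _ => step1 i]
    refine (Finset.sum_subset (Finset.subset_univ T) ?_).symm
    intro i _ hi
    refine Finset.sum_eq_zero fun j _ => ?_
    rw [hxsupp i hi]; ring
  have hsum2 : ∑ i ∈ T, ∑ j ∈ T, x i * x j * BR i j
      = 2 * (T.card : ℝ)
        - ∑ i ∈ T, ∑ j ∈ T, (if (dynkinGraph A).Adj i j then wt i j else 0) := by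
    rw [Finset.sum_congr rfl fun i hi => Finset.sum_congr rfl fun j hj => hterm i hi j hj]
    rw [Finset.sum_congr rfl fun i _ => by rw [Finset.sum_sub_distrib], Finset.sum_sub_distrib]
    congr 1
    have h1 : ∀ i ∈ T, ∑ j ∈ T, (if i = j then (2:ℝ) else 0) = 2 := by
      intro i hi
      rw [Finset.sum_ite_eq T i (fun _ => (2:ℝ)), if_pos hi]
    rw [Finset.sum_congr rfl h1, Finset.sum_const]
    simp [mul_comm]
  -- weight bounds
  have hw1 : ∀ i j, (dynkinGraph A).Adj i j → 1 ≤ wt i j := by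
    intro i j hadj
    obtain ⟨hij, hij0, hji0⟩ := hadj
    have h1 : A i j < 0 := lt_of_le_of_ne (hA.2.1 i j hij) hij0
    have h2 : A j i < 0 := lt_of_le_of_ne (hA.2.1 j i (Ne.symm hij)) hji0
    have h4 : (1 : ℤ) ≤ A i j * A j i := mul_pos_of_neg_of_neg h1 h2
    have h5 : (1:ℝ) ≤ ((A i j * A j i : ℤ) : ℝ) := by exact_mod_cast h4
    rw [hwt i j]
    have h6 := Real.sqrt_le_sqrt h5
    rwa [Real.sqrt_one] at h6
  have hw2 : ∀ i j, (dynkinGraph A).Adj i j → f i ≠ f j → Real.sqrt 2 ≤ wt i j := by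
    intro i j hadj hfij
    obtain ⟨hij, hij0, hji0⟩ := hadj
    have h1 : A i j < 0 := lt_of_le_of_ne (hA.2.1 i j hij) hij0
    have h2 : A j i < 0 := lt_of_le_of_ne (hA.2.1 j i (Ne.symm hij)) hji0
    have hsk : ¬ (A i j = -1 ∧ A j i = -1) := by
      rintro ⟨ha1, ha2⟩
      exact hfij (GCMaux.orbit_eq_of_skelAdj A hA ⟨hij, ha1, ha2⟩)
    have h4 : (2:ℤ) ≤ A i j * A j i := by
      rcases eq_or_ne (A i j) (-1) with he | hne1
      · have h6 : A j i ≤ -2 := by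
          rcases eq_or_ne (A j i) (-1) with he2 | hne2
          · exact absurd ⟨he, he2⟩ hsk
          · omega
        nlinarith
      · have h6 : A i j ≤ -2 := by omega
        nlinarith
    have h5 : (2:ℝ) ≤ ((A i j * A j i : ℤ) : ℝ) := by exact_mod_cast h4
    rw [hwt i j]
    exact Real.sqrt_le_sqrt h5
  have hwsym : ∀ i j, wt i j = wt j i := by
    intro i j; rw [hwt i j, hwt j i, mul_comm]
  have hmaster := master (dynkinGraph A) f wt hwsym hw1 hw2 n T hTcardn hconnT
  -- final contradiction
  rw [hrestrict, hsum2] at hq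
  have hs2 : (0:ℝ) ≤ Real.sqrt 2 := Real.sqrt_nonneg 2
  have hs2' : Real.sqrt 2 ^ 2 = 2 := Real.sq_sqrt (by norm_num)
  have h12 : (1:ℝ) ≤ Real.sqrt 2 := by nlinarith
  have hk4 : (4:ℝ) ≤ ((T.image f).card : ℝ) := by exact_mod_cast himgT
  have hmono : (3:ℝ) * (2*Real.sqrt 2 - 2) ≤ (((T.image f).card : ℝ) - 1) * (2*Real.sqrt 2 - 2) :=
    mul_le_mul_of_nonneg_right (by linarith) (by linarith)
  nlinarith [hmaster, hq, hs2', hs2, hmono, h12]
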